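/- Let n and even k be positive integers, let Δ⃗ = (Δ_1,…,Δ_n) be a regular drift sequence with regularity constant c ≥ 1, and let r* = max{ r ∈ {1,…,n} : Δ_{n−r+1} ≤ √(k/r) }. Assume r* is well-defined, r* > k, and r* < n. Then the minimax risk inf over estimators θ̂_n of sup over S ∈ S_n(Δ⃗,k) of E_{X∼S}[TV(θ̂_n(X), P_n)] is at least Δ_{n−r*+1}/(16·e²); consequently it is at least (1/(16·e²·c))·√(k/(r*+1)). -/

import Mathlib

open Finset

/-- `p` is a probability mass function on `Fin k` (representing `[k] = {1,…,k}`). -/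
def IsPMF {k : ℕ} (p : Fin k → ℝ) : Prop :=
  (∀ j, 0 ≤ p j) ∧ ∑ j, p j = 1

/-- Total variation distance between two pmfs on `Fin k`. -/
noncomputable def TV {k : ℕ} (p q : Fin k → ℝ) : ℝ :=
  (1 / 2) * ∑ j, |p j - q j|

/-- Probability of the sample `x` under the product distribution whose `i`-th component
(1-based, `i = 1,…,n`) is `P i`. -/
noncomputable def prodProb {n k : ℕ} (P : ℕ → Fin k → ℝ) (x : Fin n → Fin k) : ℝ :=
  ∏ i : Fin n, P (i.1 + 1) (x i)

/-- Expectation of `f` over the product distribution `P 1 × ⋯ × P n` on `[k]^n`. -/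
noncomputable def Exp {n k : ℕ} (P : ℕ → Fin k → ℝ) (f : (Fin n → Fin k) → ℝ) : ℝ :=
  ∑ x : Fin n → Fin k, prodProb P x * f x

/-- Regular drift sequence requirements on `Δ` (1-based indices `1,…,n`),
with regularity constant `c`. -/
def IsRegularDriftSeq (n : ℕ) (c : ℝ) (Δ : ℕ → ℝ) : Prop :=
  (∀ i ∈ Finset.Icc 1 n, 0 ≤ Δ i) ∧
  (∀ i ∈ Finset.Icc 1 (n - 1), Δ (i + 1) ≤ Δ i) ∧
  (∀ i ∈ Finset.Icc 2 (n - 1), Δ (i - 1) ≤ c * Δ i) ∧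
  (∀ i ∈ Finset.Icc 1 n, (Δ i = 0 ↔ i = n))

/-- Membership in the family `S_n(Δ⃗,k)`. -/
def InFamily (n k : ℕ) (Δ : ℕ → ℝ) (P : ℕ → Fin k → ℝ) : Prop :=
  (∀ i ∈ Finset.Icc 1 n, IsPMF (P i)) ∧
  (∀ i ∈ Finset.Icc 1 n, TV (P i) (P n) ≤ Δ i)

/-- The minimax risk: infimum over (pmf-valued) estimators of the supremum over
`S ∈ S_n(Δ⃗,k)` of the expected total variation distance to `P_n`. -/
noncomputable def minimaxRisk (n k : ℕ) (Δ : ℕ → ℝ) : ℝ :=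
  ⨅ θ : {θ : (Fin n → Fin k) → Fin k → ℝ // ∀ x, IsPMF (θ x)},
    ⨆ S : {P : ℕ → Fin k → ℝ // InFamily n k Δ P},
      Exp S.1 fun x => TV (θ.1 x) (S.1 n)


/-- exp(-2x) ≤ 1-x for 0 ≤ x ≤ 1/2 -/
lemma aux_exp_ineq (x : ℝ) (h0 : 0 ≤ x) (h1 : x ≤ 1/2) : Real.exp (-(2*x)) ≤ 1 - x := by
  have h := Real.add_one_le_exp (2*x)
  have hp := Real.exp_pos (2*x)
  rw [Real.exp_neg, inv_le_iff_one_le_mul₀ hp]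
  nlinarith

lemma aux_card_filter (n m : ℕ) (h : m < n) :
    (Finset.univ.filter (fun i : Fin n => m ≤ i.1)).card = n - m := by
  have : (Finset.univ.filter (fun i : Fin n => m ≤ i.1)) = Finset.Ici (⟨m, h⟩ : Fin n) := by
    ext i; simp [Fin.le_def]
  rw [this, Fin.card_Ici]

/-- Cauchy-Schwarz overlap bound -/
lemma aux_overlap {ι : Type*} [Fintype ι] (a b : ι → ℝ) (ha : ∀ i, 0 ≤ a i)
    (hb : ∀ i, 0 ≤ b i) (ha1 : ∑ i, a i = 1) (hb1 : ∑ i, b i = 1) :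
    (∑ i, Real.sqrt (a i * b i))^2 ≤ 2 * ∑ i, min (a i) (b i) := by
  have key := sum_sq_le_sum_mul_sum_of_sq_eq_mul Finset.univ
    (r := fun i => Real.sqrt (a i * b i)) (f := fun i => min (a i) (b i))
    (g := fun i => max (a i) (b i))
    (fun i _ => le_min (ha i) (hb i)) (fun i _ => le_max_of_le_left (ha i))
    (fun i _ => by rw [Real.sq_sqrt (mul_nonneg (ha i) (hb i)), min_mul_max])
  have hmax : ∑ i, max (a i) (b i) ≤ 2 := by
    calc ∑ i, max (a i) (b i) ≤ ∑ i, (a i + b i) :=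
          Finset.sum_le_sum (fun i _ => max_le (by linarith [hb i]) (by linarith [ha i]))
      _ = 2 := by rw [Finset.sum_add_distrib, ha1, hb1]; norm_num
  have hmin : 0 ≤ ∑ i, min (a i) (b i) :=
    Finset.sum_nonneg (fun i _ => le_min (ha i) (hb i))
  nlinarith

/-- sqrt of a product over a fintype -/
lemma aux_sqrt_prod {ι : Type*} (s : Finset ι) (f : ι → ℝ) (hf : ∀ i, 0 ≤ f i) :
    Real.sqrt (∏ i ∈ s, f i) = ∏ i ∈ s, Real.sqrt (f i) := by
  induction s using Finset.cons_induction with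
  | empty => simp
  | cons i s hi ih =>
      rw [Finset.prod_cons, Finset.prod_cons, Real.sqrt_mul (hf i), ih]

/-- building block on the pair space -/
noncomputable def Qp (k : ℕ) (ε : ℝ) {m : ℕ} (τ : Fin m → Bool) (p : Fin m × Fin 2) : ℝ :=
  (1 + (if p.2 = (0 : Fin 2) then (1:ℝ) else -1) * (if τ p.1 then (1:ℝ) else -1) * ε) / k

/-- the perturbed pmf on `Fin k` -/
noncomputable def qp (k : ℕ) {m : ℕ} (e : Fin m × Fin 2 ≃ Fin k) (ε : ℝ)
    (τ : Fin m → Bool) : Fin k → ℝ := fun j => Qp k ε τ (e.symm j)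

section basics
variable {k m : ℕ} (e : Fin m × Fin 2 ≃ Fin k) (ε : ℝ) (τ : Fin m → Bool)

lemma qp_pair_sum (hk : 0 < k) (i : Fin m) :
    Qp k ε τ (i, 0) + Qp k ε τ (i, 1) = 2 / k := by
  unfold Qp
  have : ((1:Fin 2) = 0) = False := by simp [Fin.ext_iff]
  simp only [this, if_false, if_true]
  rcases Bool.dichotomy (τ i) with h | h <;> simp [h] <;> field_simp <;> ring

lemma qp_nonneg (hε0 : 0 ≤ ε) (hε1 : ε ≤ 1) (p : Fin m × Fin 2) : 0 ≤ Qp k ε τ p := by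
  unfold Qp
  have : (0:ℝ) ≤ k := Nat.cast_nonneg k
  rcases ite_eq_or_eq (p.2 = (0:Fin 2)) (1:ℝ) (-1) with h | h <;>
  rcases ite_eq_or_eq (τ p.1) (1:ℝ) (-1) with h' | h' <;>
  rw [h, h'] <;>
  · apply div_nonneg _ this
    nlinarith

end basics

section basics2
variable {k m : ℕ} (e : Fin m × Fin 2 ≃ Fin k) (ε : ℝ) (τ : Fin m → Bool)

/-- transport sums over `Fin k` to sums over pairs -/
lemma sum_qp_comp (f : Fin k → ℝ → ℝ) :
    ∑ j, f j (qp k e ε τ j) = ∑ p : Fin m × Fin 2, f (e p) (Qp k ε τ p) := by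
  rw [← Equiv.sum_comp e (fun j => f j (qp k e ε τ j))]
  apply Finset.sum_congr rfl
  intro p _
  simp [qp]

lemma qp_sum_one (hk : 0 < k) (hm : m * 2 = k) : ∑ j, qp k e ε τ j = 1 := by
  have := sum_qp_comp e ε τ (fun _ x => x)
  rw [this, Fintype.sum_prod_type]
  have : ∀ i : Fin m, ∑ b : Fin 2, Qp k ε τ (i, b) = 2 / k := by
    intro i
    rw [Fin.sum_univ_two]
    exact qp_pair_sum ε τ hk i
  rw [Finset.sum_congr rfl (fun i _ => this i), Finset.sum_const, Finset.card_univ,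
    Fintype.card_fin, nsmul_eq_mul]
  have hkR : (k:ℝ) ≠ 0 := Nat.cast_ne_zero.mpr hk.ne'
  have : (m:ℝ) * 2 = k := by exact_mod_cast congrArg (Nat.cast : ℕ → ℝ) hm
  field_simp
  linarith

lemma qp_isPMF (hk : 0 < k) (hm : m * 2 = k) (hε0 : 0 ≤ ε) (hε1 : ε ≤ 1) :
    IsPMF (qp k e ε τ) :=
  ⟨fun j => qp_nonneg ε τ hε0 hε1 _, qp_sum_one e ε τ hk hm⟩

/-- TV distance between uniform and qp is ε/2 -/
lemma tv_unif_qp (hk : 0 < k) (hm : m * 2 = k) (hε0 : 0 ≤ ε) :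
    TV (fun _ : Fin k => (k:ℝ)⁻¹) (qp k e ε τ) = ε / 2 := by
  unfold TV
  have := sum_qp_comp e ε τ (fun _ x => |(k:ℝ)⁻¹ - x|)
  rw [this]
  have hkR : (0:ℝ) < k := Nat.cast_pos.mpr hk
  have habs : ∀ p : Fin m × Fin 2, |(k:ℝ)⁻¹ - Qp k ε τ p| = ε / k := by
    intro p
    unfold Qp
    rcases ite_eq_or_eq (p.2 = (0:Fin 2)) (1:ℝ) (-1) with h | h <;>
    rcases ite_eq_or_eq (τ p.1) (1:ℝ) (-1) with h' | h' <;>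
    rw [h, h'] <;>
    · rw [inv_eq_one_div, div_sub_div_same, abs_div, abs_of_pos hkR]
      congr 1
      ring_nf
      simp [abs_of_nonneg hε0, abs_neg]
  rw [Finset.sum_congr rfl (fun p _ => habs p), Finset.sum_const, Finset.card_univ,
    Fintype.card_prod, Fintype.card_fin, Fintype.card_fin, nsmul_eq_mul]
  have hmc : (m:ℝ) * 2 = k := by exact_mod_cast congrArg (Nat.cast : ℕ → ℝ) hm
  have hkR' : (k:ℝ) ≠ 0 := ne_of_gt hkR
  have hmne : (m:ℝ) ≠ 0 := by
    have : 0 < m := by omega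
    exact_mod_cast this.ne'
  push_cast
  rw [← hmc]
  field_simp

end basics2

def flipB {m : ℕ} (i₀ : Fin m) (τ : Fin m → Bool) : Fin m → Bool :=
  Function.update τ i₀ (!τ i₀)

lemma flipB_invol {m : ℕ} (i₀ : Fin m) : Function.Involutive (flipB i₀) := by
  intro τ
  funext j
  by_cases h : j = i₀ <;> simp [flipB, Function.update, h]

section basics3
variable {k m : ℕ} (e : Fin m × Fin 2 ≃ Fin k) (ε : ℝ) (τ : Fin m → Bool)

lemma Qp_zero (i : Fin m) :
    Qp k ε τ (i, 0) = (1 + (if τ i then (1:ℝ) else -1) * ε) / k := by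
  simp [Qp]

lemma Qp_one (i : Fin m) :
    Qp k ε τ (i, 1) = (1 - (if τ i then (1:ℝ) else -1) * ε) / k := by
  have h1 : ((1 : Fin 2) = 0) = False := by simp [Fin.ext_iff]
  simp only [Qp, h1, if_false]
  ring_nf

lemma qp_affinity (hk : 0 < k) (hm : m * 2 = k) (hε0 : 0 ≤ ε) (hε1 : ε ≤ 1) (i₀ : Fin m) :
    ∑ j, Real.sqrt (qp k e ε τ j * qp k e ε (flipB i₀ τ) j)
      = 1 - 2/(k:ℝ) + 2 * Real.sqrt (1 - ε^2) / k := by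
  have hkR : (0:ℝ) < k := Nat.cast_pos.mpr hk
  set τ' := flipB i₀ τ with hτ'
  have hsq : ∀ s : ℝ, s^2 = 1 →
      Real.sqrt ((1 + s*ε)/k * ((1 - s*ε)/k)) = Real.sqrt (1 - ε^2)/k := by
    intro s hs
    rw [div_mul_div_comm, show (1+s*ε)*(1-s*ε) = 1-ε^2 by nlinarith,
      Real.sqrt_div (by nlinarith), Real.sqrt_mul_self hkR.le]
  have step : ∑ j, Real.sqrt (qp k e ε τ j * qp k e ε τ' j)
      = ∑ p : Fin m × Fin 2, Real.sqrt (Qp k ε τ p * Qp k ε τ' p) := by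
    rw [← Equiv.sum_comp e (fun j => Real.sqrt (qp k e ε τ j * qp k e ε τ' j))]
    apply Finset.sum_congr rfl
    intro p _
    simp [qp]
  rw [step, Fintype.sum_prod_type]
  have hterm : ∀ i : Fin m, (∑ b : Fin 2, Real.sqrt (Qp k ε τ (i, b) * Qp k ε τ' (i, b)))
      = if i = i₀ then 2 * Real.sqrt (1 - ε^2) / k else 2 / k := by
    intro i
    rw [Fin.sum_univ_two]
    by_cases h : i = i₀
    · subst h
      have hτi : τ' i = !τ i := by simp [hτ', flipB]
      rw [Qp_zero, Qp_zero, Qp_one, Qp_one, hτi, if_pos rfl]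
      rcases Bool.dichotomy (τ i) with hb | hb
      · simp only [hb, Bool.not_false, Bool.false_eq_true, Bool.true_eq_false, if_true, if_false]
        rw [show (1 + -1*ε) = 1 - 1*ε by ring, show (1 - -1*ε) = 1 + 1*ε by ring]
        rw [mul_comm ((1 - 1*ε)/(k:ℝ)) ((1 + 1*ε)/(k:ℝ))]
        rw [hsq 1 (by norm_num)]
        ring
      · simp only [hb, Bool.not_true, Bool.false_eq_true, Bool.true_eq_false, if_true, if_false]
        rw [show (1 + -1*ε) = 1 - 1*ε by ring, show (1 - -1*ε) = 1 + 1*ε by ring]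
        rw [mul_comm ((1 - 1*ε)/(k:ℝ)) ((1 + 1*ε)/(k:ℝ))]
        rw [hsq 1 (by norm_num)]
        ring
    · have hτi : τ' i = τ i := by simp [hτ', flipB, Function.update, h]
      rw [Qp_zero, Qp_zero, Qp_one, Qp_one, hτi, if_neg h]
      have h0 : (0:ℝ) ≤ (1 + (if τ i then (1:ℝ) else -1) * ε) / k := by
        rcases ite_eq_or_eq (τ i) (1:ℝ) (-1) with hh | hh <;> rw [hh] <;>
          (apply div_nonneg _ hkR.le; nlinarith)
      have h0' : (0:ℝ) ≤ (1 - (if τ i then (1:ℝ) else -1) * ε) / k := by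
        rcases ite_eq_or_eq (τ i) (1:ℝ) (-1) with hh | hh <;> rw [hh] <;>
          (apply div_nonneg _ hkR.le; nlinarith)
      rw [Real.sqrt_mul_self h0, Real.sqrt_mul_self h0']
      rcases ite_eq_or_eq (τ i) (1:ℝ) (-1) with hh | hh <;> rw [hh] <;> (field_simp; ring)
  rw [Finset.sum_congr rfl (fun i _ => hterm i)]
  set A := 2 * Real.sqrt (1 - ε^2) / (k:ℝ)
  set B := 2 / (k:ℝ)
  have hsplit : ∀ i : Fin m, (if i = i₀ then A else B) = B + (if i = i₀ then A - B else 0) := by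
    intro i; split <;> ring
  rw [Finset.sum_congr rfl (fun i _ => hsplit i), Finset.sum_add_distrib,
    Finset.sum_ite_eq' Finset.univ i₀ (fun _ => A - B), if_pos (Finset.mem_univ i₀),
    Finset.sum_const, Finset.card_univ, Fintype.card_fin, nsmul_eq_mul]
  have hmc : (m:ℝ) * 2 = k := by exact_mod_cast congrArg (Nat.cast : ℕ → ℝ) hm
  have : (m:ℝ) * B = 1 := by
    simp only [B]
    field_simp
    linarith
  rw [this]
  ring

end basics3

noncomputable def decode {k m : ℕ} (e : Fin m × Fin 2 ≃ Fin k) (θv : Fin k → ℝ)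
    (i : Fin m) : Bool := decide (θv (e (i,1)) ≤ θv (e (i,0)))

lemma decode_bound {k m : ℕ} (e : Fin m × Fin 2 ≃ Fin k) (ε : ℝ) (τ : Fin m → Bool)
    (hε0 : 0 ≤ ε) (θv : Fin k → ℝ) :
    (ε/(k:ℝ)) * ((Finset.univ.filter fun i : Fin m => decode e θv i ≠ τ i).card : ℝ)
      ≤ TV θv (qp k e ε τ) := by
  have hkk : (0:ℝ) ≤ (k:ℝ) := Nat.cast_nonneg k
  unfold TV
  have step : ∑ j, |θv j - qp k e ε τ j| = ∑ p : Fin m × Fin 2, |θv (e p) - Qp k ε τ p| := by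
    rw [← Equiv.sum_comp e (fun j => |θv j - qp k e ε τ j|)]
    exact Finset.sum_congr rfl (fun p _ => by simp [qp])
  rw [step, Fintype.sum_prod_type]
  have key : ∀ i : Fin m, (if decode e θv i ≠ τ i then 2*ε/(k:ℝ) else 0)
      ≤ ∑ b : Fin 2, |θv (e (i,b)) - Qp k ε τ (i,b)| := by
    intro i
    rw [Fin.sum_univ_two, Qp_zero, Qp_one]
    set A := θv (e (i,0)) with hA
    set B := θv (e (i,1)) with hB
    by_cases hd : decode e θv i ≠ τ i
    · rw [if_pos hd]
      rcases Bool.dichotomy (τ i) with hb | hb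
      · have hdec : decode e θv i = true := by
          rcases Bool.dichotomy (decode e θv i) with h | h
          · exact absurd (h.trans hb.symm) hd; 
          · exact h
        have hBA : B ≤ A := of_decide_eq_true hdec
        simp only [hb, Bool.false_eq_true, if_false]
        have h1 : |(A - (1 + -1*ε)/(k:ℝ)) - (B - (1 - -1*ε)/(k:ℝ))|
            ≤ |A - (1 + -1*ε)/(k:ℝ)| + |B - (1 - -1*ε)/(k:ℝ)| := abs_sub _ _
        have h2 : (A - (1 + -1*ε)/(k:ℝ)) - (B - (1 - -1*ε)/(k:ℝ))
            = (A - B) + 2*ε/(k:ℝ) := by ring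
        have h3 : 0 ≤ 2*ε/(k:ℝ) := by positivity
        rw [h2] at h1
        rw [abs_of_nonneg (by linarith)] at h1
        linarith
      · have hdec : decode e θv i = false := by
          rcases Bool.dichotomy (decode e θv i) with h | h
          · exact h
          · exact absurd (h.trans hb.symm) hd
        have hBA : ¬ (B ≤ A) := of_decide_eq_false hdec
        push_neg at hBA
        simp only [hb, if_true]
        have h1 : |(A - (1 + 1*ε)/(k:ℝ)) - (B - (1 - 1*ε)/(k:ℝ))|
            ≤ |A - (1 + 1*ε)/(k:ℝ)| + |B - (1 - 1*ε)/(k:ℝ)| := abs_sub _ _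
        have h2 : (A - (1 + 1*ε)/(k:ℝ)) - (B - (1 - 1*ε)/(k:ℝ))
            = (A - B) - 2*ε/(k:ℝ) := by ring
        have h3 : 0 ≤ 2*ε/(k:ℝ) := by positivity
        rw [h2] at h1
        have h4 : -((A - B) - 2*ε/(k:ℝ)) ≤ |(A - B) - 2*ε/(k:ℝ)| := neg_le_abs _
        have h5 : 2*ε/(k:ℝ) ≤ -((A - B) - 2*ε/(k:ℝ)) := by linarith
        linarith
    · rw [if_neg hd]
      positivity
  have hsum : (ε/(k:ℝ)) * ((Finset.univ.filter fun i : Fin m => decode e θv i ≠ τ i).card : ℝ)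
      = (1/2) * ∑ i : Fin m, (if decode e θv i ≠ τ i then 2*ε/(k:ℝ) else 0) := by
    rw [← Finset.sum_filter, Finset.sum_const, nsmul_eq_mul]
    ring
  rw [hsum]
  have := Finset.sum_le_sum (fun i (_ : i ∈ Finset.univ) => key i)
  linarith

noncomputable def Sfam (n r k : ℕ) {m : ℕ} (e : Fin m × Fin 2 ≃ Fin k) (ε : ℝ)
    (τ : Fin m → Bool) : ℕ → Fin k → ℝ :=
  fun i => if i ≤ n - r then (fun _ => (k:ℝ)⁻¹) else qp k e ε τ

lemma unif_isPMF {k : ℕ} (hk : 0 < k) : IsPMF (fun _ : Fin k => (k:ℝ)⁻¹) := by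
  constructor
  · intro j; positivity
  · rw [Finset.sum_const, Finset.card_univ, Fintype.card_fin, nsmul_eq_mul]
    field_simp

section prodlayer
variable {n r k m : ℕ} (e : Fin m × Fin 2 ≃ Fin k) (ε : ℝ) (τ : Fin m → Bool)

lemma Sfam_isPMF (hk : 0 < k) (hm : m * 2 = k) (hε0 : 0 ≤ ε) (hε1 : ε ≤ 1) (i : ℕ) :
    IsPMF (Sfam n r k e ε τ i) := by
  unfold Sfam
  split
  · exact unif_isPMF hk
  · exact qp_isPMF e ε τ hk hm hε0 hε1

lemma prodProb_nonneg {P : ℕ → Fin k → ℝ} (hP : ∀ i j, 0 ≤ P i j) (x : Fin n → Fin k) :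
    0 ≤ prodProb P x :=
  Finset.prod_nonneg (fun i _ => hP _ _)

lemma prodProb_sum_one {P : ℕ → Fin k → ℝ} (hP : ∀ i : Fin n, ∑ a, P (i.1+1) a = 1) :
    ∑ x : Fin n → Fin k, prodProb P x = 1 := by
  unfold prodProb
  rw [← Fintype.prod_sum (fun (i : Fin n) (a : Fin k) => P (i.1+1) a)]
  rw [Finset.prod_congr rfl (fun i _ => hP i), Finset.prod_const_one]

/-- Hellinger affinity between the two product measures for a one-bit flip. -/
lemma Sfam_affinity (hk : 0 < k) (hm : m * 2 = k) (hε0 : 0 ≤ ε) (hε1 : ε ≤ 1)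
    (hr1 : 1 ≤ r) (hrn : r < n) (i₀ : Fin m) :
    ∑ x : Fin n → Fin k,
      Real.sqrt (prodProb (Sfam n r k e ε τ) x * prodProb (Sfam n r k e ε (flipB i₀ τ)) x)
      = (1 - 2/(k:ℝ) + 2 * Real.sqrt (1 - ε^2) / k) ^ r := by
  have hkR : (0:ℝ) < k := Nat.cast_pos.mpr hk
  set τ' := flipB i₀ τ with hτ'
  set ρ : ℝ := 1 - 2/(k:ℝ) + 2 * Real.sqrt (1 - ε^2) / k with hρ
  have hQnn : ∀ (σ : Fin m → Bool) (i : ℕ) (a : Fin k), 0 ≤ Sfam n r k e ε σ i a := by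
    intro σ i a
    exact (Sfam_isPMF e ε σ hk hm hε0 hε1 i).1 a
  have hsqrt : ∀ x : Fin n → Fin k,
      Real.sqrt (prodProb (Sfam n r k e ε τ) x * prodProb (Sfam n r k e ε τ') x)
      = ∏ i : Fin n, Real.sqrt (Sfam n r k e ε τ (i.1+1) (x i) * Sfam n r k e ε τ' (i.1+1) (x i)) := by
    intro x
    unfold prodProb
    rw [← Finset.prod_mul_distrib]
    exact aux_sqrt_prod Finset.univ _ (fun i => mul_nonneg (hQnn τ _ _) (hQnn τ' _ _))
  rw [Finset.sum_congr rfl (fun x _ => hsqrt x),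
    ← Fintype.prod_sum (fun (i : Fin n) (a : Fin k) =>
      Real.sqrt (Sfam n r k e ε τ (i.1+1) a * Sfam n r k e ε τ' (i.1+1) a))]
  have hfac : ∀ i : Fin n,
      (∑ a, Real.sqrt (Sfam n r k e ε τ (i.1+1) a * Sfam n r k e ε τ' (i.1+1) a))
      = if (i.1+1 ≤ n - r) then 1 else ρ := by
    intro i
    by_cases h : i.1 + 1 ≤ n - r
    · rw [if_pos h]
      simp only [Sfam, if_pos h]
      have : ∀ a : Fin k, Real.sqrt ((k:ℝ)⁻¹ * (k:ℝ)⁻¹) = (k:ℝ)⁻¹ :=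
        fun a => Real.sqrt_mul_self (by positivity)
      rw [Finset.sum_congr rfl (fun a _ => this a), Finset.sum_const, Finset.card_univ,
        Fintype.card_fin, nsmul_eq_mul]
      field_simp
    · rw [if_neg h]
      simp only [Sfam, if_neg h]
      exact qp_affinity e ε τ hk hm hε0 hε1 i₀
  rw [Finset.prod_congr rfl (fun i _ => hfac i), Finset.prod_ite, Finset.prod_const,
    Finset.prod_const, one_pow, one_mul]
  congr 1
  have hnn : n - r < n := by omega
  have : (Finset.univ.filter (fun i : Fin n => ¬ (i.1 + 1 ≤ n - r)))
      = (Finset.univ.filter (fun i : Fin n => n - r ≤ i.1)) := by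
    apply Finset.filter_congr
    intro i _
    constructor
    · intro hh; omega
    · intro hh; omega
  rw [this, aux_card_filter n (n-r) hnn]
  omega

end prodlayer

section assouad
variable {n r k m : ℕ} (e : Fin m × Fin 2 ≃ Fin k) (ε : ℝ)

lemma assouad_step (hk : 0 < k) (hm : m * 2 = k) (hε0 : 0 ≤ ε) (hε1 : ε ≤ 1)
    (hr1 : 1 ≤ r) (hrn : r < n)
    (hρ : Real.exp (-(1:ℝ)) ≤ (1 - 2/(k:ℝ) + 2 * Real.sqrt (1 - ε^2) / k) ^ r)
    (θ : (Fin n → Fin k) → Fin k → ℝ) :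
    (2^m : ℝ) * (ε * Real.exp (-(2:ℝ)) / 8)
      ≤ ∑ τ : Fin m → Bool, Exp (Sfam n r k e ε τ) (fun x => TV (θ x) (qp k e ε τ)) := by
  classical
  have hkR : (0:ℝ) < k := Nat.cast_pos.mpr hk
  set π : (Fin m → Bool) → (Fin n → Fin k) → ℝ :=
    fun τ x => prodProb (Sfam n r k e ε τ) x with hπ
  have hπnn : ∀ τ x, 0 ≤ π τ x := fun τ x =>
    prodProb_nonneg (fun i j => (Sfam_isPMF e ε τ hk hm hε0 hε1 i).1 j) x
  have hπ1 : ∀ τ, ∑ x, π τ x = 1 := fun τ =>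
    prodProb_sum_one (fun i => (Sfam_isPMF e ε τ hk hm hε0 hε1 (i.1+1)).2)
  -- overlap bound for one-bit flips
  have hover : ∀ (i₀ : Fin m) (τ : Fin m → Bool),
      Real.exp (-(2:ℝ)) / 2 ≤ ∑ x, min (π τ x) (π (flipB i₀ τ) x) := by
    intro i₀ τ
    have hcs := aux_overlap (π τ) (π (flipB i₀ τ)) (hπnn τ) (hπnn _) (hπ1 τ) (hπ1 _)
    have haff := Sfam_affinity e ε τ hk hm hε0 hε1 hr1 hrn i₀
    have hge : Real.exp (-(1:ℝ)) ≤ ∑ x, Real.sqrt (π τ x * π (flipB i₀ τ) x) := by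
      rw [hπ]; rw [haff]; exact hρ
    have h2 : Real.exp (-(2:ℝ)) = Real.exp (-(1:ℝ)) * Real.exp (-(1:ℝ)) := by
      rw [← Real.exp_add]; norm_num
    nlinarith [Real.exp_pos (-(1:ℝ))]
  -- step 1: pointwise lower bound of the expectation by hamming counting
  have step1 : ∀ τ, (ε/(k:ℝ)) * ∑ x, π τ x *
        (∑ i : Fin m, (if decode e (θ x) i ≠ τ i then (1:ℝ) else 0))
      ≤ Exp (Sfam n r k e ε τ) (fun x => TV (θ x) (qp k e ε τ)) := by
    intro τ
    rw [Finset.mul_sum]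
    unfold Exp
    apply Finset.sum_le_sum
    intro x _
    have hb := decode_bound e ε τ hε0 (θ x)
    have hcard : (∑ i : Fin m, (if decode e (θ x) i ≠ τ i then (1:ℝ) else 0))
        = ((Finset.univ.filter fun i : Fin m => decode e (θ x) i ≠ τ i).card : ℝ) := by
      rw [Finset.sum_boole]
    rw [show (ε/(k:ℝ)) * (π τ x * ∑ i : Fin m, (if decode e (θ x) i ≠ τ i then (1:ℝ) else 0))
      = π τ x * ((ε/(k:ℝ)) * ∑ i : Fin m, (if decode e (θ x) i ≠ τ i then (1:ℝ) else 0)) by ring]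
    apply mul_le_mul_of_nonneg_left _ (hπnn τ x)
    rw [hcard]
    exact hb
  -- step 2: per-bit sums
  set F : Fin m → ℝ := fun i => ∑ τ : Fin m → Bool, ∑ x,
    π τ x * (if decode e (θ x) i ≠ τ i then (1:ℝ) else 0) with hF
  have hFbound : ∀ i : Fin m, (2^m : ℝ) * (Real.exp (-(2:ℝ)) / 4) ≤ F i := by
    intro i
    set g : (Fin m → Bool) → ℝ := fun τ => ∑ x,
      π τ x * (if decode e (θ x) i ≠ τ i then (1:ℝ) else 0) with hg
    have hinv := flipB_invol (m := m) i
    have hflip : ∑ τ, g (flipB i τ) = ∑ τ, g τ := Equiv.sum_comp hinv.toPerm g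
    have hpair : ∀ τ, ∑ x, min (π τ x) (π (flipB i τ) x) ≤ g τ + g (flipB i τ) := by
      intro τ
      rw [hg]
      simp only
      rw [← Finset.sum_add_distrib]
      apply Finset.sum_le_sum
      intro x _
      have hτ'i : (flipB i τ) i = !(τ i) := by simp [flipB]
      by_cases hd : decode e (θ x) i = τ i
      · have h1 : (if decode e (θ x) i ≠ τ i then (1:ℝ) else 0) = 0 := by
          rw [if_neg]; simp [hd]
        have h2 : (if decode e (θ x) i ≠ (flipB i τ) i then (1:ℝ) else 0) = 1 := by
          rw [if_pos]; rw [hτ'i, hd]; simp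
        rw [h1, h2, mul_zero, mul_one, zero_add]
        exact min_le_right _ _
      · have h1 : (if decode e (θ x) i ≠ τ i then (1:ℝ) else 0) = 1 := by rw [if_pos hd]
        have h2 : (if decode e (θ x) i ≠ (flipB i τ) i then (1:ℝ) else 0) = 0 := by
          rw [if_neg]
          rw [hτ'i]
          rcases Bool.dichotomy (τ i) with hb | hb <;> rcases Bool.dichotomy (decode e (θ x) i) with hb' | hb' <;>
            simp [hb, hb'] at hd ⊢
        rw [h1, h2, mul_zero, mul_one, add_zero]
        exact min_le_left _ _
    have hsum2 : (2^m : ℝ) * (Real.exp (-(2:ℝ)) / 2) ≤ ∑ τ, (g τ + g (flipB i τ)) := by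
      calc (2^m : ℝ) * (Real.exp (-(2:ℝ)) / 2)
          = ∑ _τ : Fin m → Bool, (Real.exp (-(2:ℝ)) / 2) := by
            rw [Finset.sum_const, Finset.card_univ, nsmul_eq_mul]
            congr 1
            rw [Fintype.card_fun, Fintype.card_bool, Fintype.card_fin]
            push_cast
            ring
        _ ≤ ∑ τ, (g τ + g (flipB i τ)) :=
            Finset.sum_le_sum (fun τ _ => le_trans (hover i τ) (hpair τ))
    rw [Finset.sum_add_distrib, hflip] at hsum2
    have : F i = ∑ τ, g τ := rfl
    rw [this]
    linarith
  -- assemble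
  have main : (ε/(k:ℝ)) * ∑ i : Fin m, F i
      ≤ ∑ τ : Fin m → Bool, Exp (Sfam n r k e ε τ) (fun x => TV (θ x) (qp k e ε τ)) := by
    have swap : ∑ i : Fin m, F i = ∑ τ : Fin m → Bool, ∑ x, π τ x *
        (∑ i : Fin m, (if decode e (θ x) i ≠ τ i then (1:ℝ) else 0)) := by
      rw [hF]
      rw [Finset.sum_comm]
      apply Finset.sum_congr rfl
      intro τ _
      rw [Finset.sum_comm]
      apply Finset.sum_congr rfl
      intro x _
      rw [Finset.mul_sum]
    rw [swap, Finset.mul_sum]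
    exact Finset.sum_le_sum (fun τ _ => by
      have := step1 τ
      rw [Finset.mul_sum] at this ⊢
      exact this)
  have hFtot : (2^m : ℝ) * ((m:ℝ) * (Real.exp (-(2:ℝ)) / 4)) ≤ ∑ i : Fin m, F i := by
    calc (2^m : ℝ) * ((m:ℝ) * (Real.exp (-(2:ℝ)) / 4))
        = ∑ _i : Fin m, (2^m : ℝ) * (Real.exp (-(2:ℝ)) / 4) := by
          rw [Finset.sum_const, Finset.card_univ, Fintype.card_fin, nsmul_eq_mul]; ring
      _ ≤ ∑ i : Fin m, F i := Finset.sum_le_sum (fun i _ => hFbound i)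
  have hmc : (m:ℝ) * 2 = k := by exact_mod_cast congrArg (Nat.cast : ℕ → ℝ) hm
  have hεk : 0 ≤ ε / (k:ℝ) := by positivity
  have := mul_le_mul_of_nonneg_left hFtot hεk
  refine le_trans ?_ (le_trans this main)
  rw [show (ε/(k:ℝ)) * ((2^m : ℝ) * ((m:ℝ) * (Real.exp (-(2:ℝ)) / 4)))
    = (2^m : ℝ) * (ε * ((m:ℝ)/(k:ℝ)) * (Real.exp (-(2:ℝ)) / 4)) by ring]
  have hmk : (m:ℝ)/(k:ℝ) = 1/2 := by
    rw [div_eq_div_iff (ne_of_gt hkR) (two_ne_zero)]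
    linarith
  rw [hmk]
  apply le_of_eq
  ring
end assouad

lemma rho_pow_bound {k r : ℕ} (ε : ℝ) (hk : 0 < k) (hr1 : 1 ≤ r)
    (hε0 : 0 ≤ ε) (hε1 : ε ≤ 1) (hε2 : ε^2 ≤ (k:ℝ)/(4*r)) :
    Real.exp (-(1:ℝ)) ≤ (1 - 2/(k:ℝ) + 2 * Real.sqrt (1 - ε^2) / k) ^ r := by
  have hkR : (0:ℝ) < k := Nat.cast_pos.mpr hk
  have hrR : (0:ℝ) < r := by exact_mod_cast hr1
  have h01 : 0 ≤ 1 - ε^2 := by nlinarith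
  have hr1R : (1:ℝ) ≤ (r:ℝ) := by exact_mod_cast hr1
  have hsq : 1 - ε^2 ≤ Real.sqrt (1 - ε^2) := by
    nlinarith [Real.sq_sqrt h01, Real.sqrt_nonneg (1 - ε^2),
      sq_nonneg (1 - Real.sqrt (1 - ε^2)), sq_nonneg ε]
  have hρ1 : 1 - 1/(2*(r:ℝ)) ≤ 1 - 2/(k:ℝ) + 2 * Real.sqrt (1 - ε^2) / k := by
    have h1 : 2 * (1 - ε^2) / (k:ℝ) ≤ 2 * Real.sqrt (1 - ε^2) / k := by
      gcongr
    have h2 : 2 * ε^2 / (k:ℝ) ≤ 1/(2*(r:ℝ)) := by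
      rw [le_div_iff₀ (by positivity : (0:ℝ) < 4*(r:ℝ))] at hε2
      rw [div_le_div_iff₀ hkR (by positivity)]
      nlinarith
    have h3 : 2 * (1 - ε^2)/(k:ℝ) = 2/(k:ℝ) - 2*ε^2/(k:ℝ) := by ring
    linarith
  have hexp : Real.exp (-(1/(r:ℝ))) ≤ 1 - 1/(2*(r:ℝ)) := by
    have hr1R : (1:ℝ) ≤ (r:ℝ) := by exact_mod_cast hr1
    have := aux_exp_ineq (1/(2*(r:ℝ))) (by positivity) (by
      rw [div_le_div_iff₀ (by positivity) (by norm_num)]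
      nlinarith)
    convert this using 2
    field_simp
  have hρpos : 0 ≤ 1 - 2/(k:ℝ) + 2 * Real.sqrt (1 - ε^2) / k := by
    have he := (Real.exp_pos (-(1/(r:ℝ)))).le
    linarith [hexp, hρ1]
  calc Real.exp (-(1:ℝ)) = Real.exp (-(1/(r:ℝ))) ^ r := by
        rw [← Real.exp_nat_mul]
        congr 1
        field_simp
    _ ≤ (1 - 2/(k:ℝ) + 2 * Real.sqrt (1 - ε^2) / k) ^ r :=
        pow_le_pow_left₀ (Real.exp_pos _).le (le_trans hexp hρ1) r

lemma tv_le_one {k : ℕ} (p q : Fin k → ℝ) (hp : IsPMF p) (hq : IsPMF q) :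
    TV p q ≤ 1 := by
  unfold TV
  have : ∑ j, |p j - q j| ≤ ∑ j, (p j + q j) := by
    apply Finset.sum_le_sum
    intro j _
    rw [abs_sub_le_iff]
    constructor <;> nlinarith [hp.1 j, hq.1 j]
  rw [Finset.sum_add_distrib, hp.2, hq.2] at this
  linarith

lemma tv_nonneg {k : ℕ} (p q : Fin k → ℝ) : 0 ≤ TV p q := by
  unfold TV
  have : (0:ℝ) ≤ ∑ j, |p j - q j| := Finset.sum_nonneg (fun j _ => abs_nonneg _)
  linarith

lemma tv_self {k : ℕ} (p : Fin k → ℝ) : TV p p = 0 := by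
  unfold TV; simp

lemma drift_antitone {n : ℕ} {c : ℝ} {Δ : ℕ → ℝ}
    (hmono : ∀ i ∈ Finset.Icc 1 (n - 1), Δ (i + 1) ≤ Δ i) :
    ∀ a b, 1 ≤ a → a ≤ b → b ≤ n → Δ b ≤ Δ a := by
  intro a b ha hab hbn
  induction b with
  | zero => omega
  | succ b ih =>
      rcases Nat.lt_or_ge a (b+1) with h | h
      · have hb : Δ (b+1) ≤ Δ b := hmono b (by simp; omega)
        exact le_trans hb (ih (by omega) (by omega))
      · have : a = b + 1 := by omega
        rw [this]

lemma exp_le_one {n k : ℕ} (P : ℕ → Fin k → ℝ) (hP : ∀ i ∈ Finset.Icc 1 n, IsPMF (P i))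
    (f : (Fin n → Fin k) → ℝ) (hf0 : ∀ x, 0 ≤ f x) (hf1 : ∀ x, f x ≤ 1) :
    Exp P f ≤ 1 := by
  have hmem : ∀ i : Fin n, (i.1 + 1) ∈ Finset.Icc 1 n := by
    intro i; rw [Finset.mem_Icc]; have := i.isLt; omega
  have hπnn : ∀ x : Fin n → Fin k, 0 ≤ prodProb P x :=
    fun x => Finset.prod_nonneg (fun i _ => (hP _ (hmem i)).1 _)
  have hπ1 : ∑ x : Fin n → Fin k, prodProb P x = 1 :=
    prodProb_sum_one (fun i => (hP _ (hmem i)).2)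
  unfold Exp
  calc ∑ x : Fin n → Fin k, prodProb P x * f x
      ≤ ∑ x : Fin n → Fin k, prodProb P x * 1 :=
        Finset.sum_le_sum (fun x _ => mul_le_mul_of_nonneg_left (hf1 x) (hπnn x))
    _ = 1 := by simp only [mul_one]; exact hπ1


/-- lower bound of Theorem 1. For even `k`, a regular drift sequence with
constant `c ≥ 1`, and `r* = max{r ∈ [n] : Δ_{n−r+1} ≤ √(k/r)}` well-defined with
`k < r* < n`, the minimax risk is at least `Δ_{n−r*+1}/(16e²)`, and consequently at least
`(1/(16e²c))·√(k/(r*+1))`. -/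
theorem stmt11 (n k r : ℕ) (hn : 0 < n) (hk : 0 < k) (hkeven : k % 2 = 0)
    (c : ℝ) (hc : 1 ≤ c) (Δ : ℕ → ℝ)
    (hreg : IsRegularDriftSeq n c Δ)
    (hr : r ∈ Finset.Icc 1 n)
    (hΔr : Δ (n - r + 1) ≤ Real.sqrt ((k : ℝ) / r))
    (hmax : ∀ r' ∈ Finset.Icc 1 n, Δ (n - r' + 1) ≤ Real.sqrt ((k : ℝ) / r') → r' ≤ r)
    (hkr : k < r) (hrn : r < n) :
    Δ (n - r + 1) / (16 * Real.exp 2) ≤ minimaxRisk n k Δ ∧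
    (1 / (16 * Real.exp 2 * c)) * Real.sqrt ((k : ℝ) / (r + 1)) ≤ minimaxRisk n k Δ := by
  classical
  obtain ⟨hnn, hmono, hcreg, hzero⟩ := hreg
  have hr1 : 1 ≤ r := (Finset.mem_Icc.mp hr).1
  have hk2 : 2 ≤ k := by omega
  have hr2 : 2 ≤ r := by omega
  set m := k / 2 with hmdef
  have hm : m * 2 = k := by omega
  have e : Fin m × Fin 2 ≃ Fin k := finProdFinEquiv.trans (finCongr hm)
  set δ := Δ (n - r + 1) with hδdef
  have hmemδ : (n - r + 1) ∈ Finset.Icc 1 n := by rw [Finset.mem_Icc]; omega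
  have hδ0 : 0 ≤ δ := hnn _ hmemδ
  have hδne : δ ≠ 0 := by
    intro h
    have := (hzero _ hmemδ).mp h
    omega
  have hδpos : 0 < δ := lt_of_le_of_ne hδ0 (Ne.symm hδne)
  have hkR : (0:ℝ) < k := by exact_mod_cast hk
  have hrR : (0:ℝ) < r := by exact_mod_cast (by omega : 0 < r)
  have hkrR : (k:ℝ)/r ≤ 1 := by
    rw [div_le_one hrR]; exact_mod_cast hkr.le
  have hsqrt1 : Real.sqrt ((k:ℝ)/r) ≤ 1 := by
    rw [show (1:ℝ) = Real.sqrt 1 by rw [Real.sqrt_one]]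
    exact Real.sqrt_le_sqrt hkrR
  set ε := min δ (Real.sqrt ((k:ℝ)/r) / 2) with hεdef
  have hε0 : 0 ≤ ε := le_min hδ0 (by positivity)
  have hε1 : ε ≤ 1 := le_trans (min_le_right _ _) (by linarith)
  have hε2 : ε^2 ≤ (k:ℝ)/(4*r) := by
    have h1 : ε ≤ Real.sqrt ((k:ℝ)/r) / 2 := min_le_right _ _
    have h2 : ε^2 ≤ (Real.sqrt ((k:ℝ)/r)/2)^2 := by nlinarith
    have h3 : (Real.sqrt ((k:ℝ)/r)/2)^2 = ((k:ℝ)/r)/4 := by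
      rw [div_pow, Real.sq_sqrt (by positivity)]
      norm_num
    rw [h3] at h2
    calc ε^2 ≤ ((k:ℝ)/r)/4 := h2
      _ = (k:ℝ)/(4*r) := by ring
  have hδ2ε : δ ≤ 2 * ε := by
    rcases min_cases δ (Real.sqrt ((k:ℝ)/r) / 2) with ⟨heq, _⟩ | ⟨heq, hlt⟩
    · rw [hεdef, heq]; linarith
    · rw [hεdef, heq]; linarith [hΔr]
  have hρ := rho_pow_bound (k := k) (r := r) ε hk hr1 hε0 hε1 hε2
  -- family membership
  have hSn : ∀ τ : Fin m → Bool, Sfam n r k e ε τ n = qp k e ε τ := by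
    intro τ
    unfold Sfam
    rw [if_neg (by omega)]
  have hfam : ∀ τ : Fin m → Bool, InFamily n k Δ (Sfam n r k e ε τ) := by
    intro τ
    constructor
    · intro i _; exact Sfam_isPMF e ε τ hk hm hε0 hε1 i
    · intro i hi
      rw [hSn τ]
      rw [Finset.mem_Icc] at hi
      by_cases h : i ≤ n - r
      · have : Sfam n r k e ε τ i = fun _ => (k:ℝ)⁻¹ := by unfold Sfam; rw [if_pos h]
        rw [this, tv_unif_qp e ε τ hk hm hε0]
        have hΔi : δ ≤ Δ i := drift_antitone (c := c) hmono i (n - r + 1) (by omega) (by omega) (by omega)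
        have hεδ : ε ≤ δ := min_le_left _ _
        linarith
      · have : Sfam n r k e ε τ i = qp k e ε τ := by unfold Sfam; rw [if_neg h]
        rw [this, tv_self]
        exact hnn i (Finset.mem_Icc.mpr hi)
  -- the key bound for every estimator
  have hkey : ∀ θ : {θ : (Fin n → Fin k) → Fin k → ℝ // ∀ x, IsPMF (θ x)},
      δ / (16 * Real.exp 2) ≤
      ⨆ S : {P : ℕ → Fin k → ℝ // InFamily n k Δ P},
        Exp S.1 fun x => TV (θ.1 x) (S.1 n) := by
    intro θ
    have hass := assouad_step e ε hk hm hε0 hε1 hr1 hrn hρ θ.1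
    -- extract a good τ
    have hex : ∃ τ : Fin m → Bool,
        ε * Real.exp (-(2:ℝ)) / 8 ≤ Exp (Sfam n r k e ε τ) (fun x => TV (θ.1 x) (qp k e ε τ)) := by
      by_contra hcon
      push_neg at hcon
      have : ∑ τ : Fin m → Bool, Exp (Sfam n r k e ε τ) (fun x => TV (θ.1 x) (qp k e ε τ))
          ≤ ∑ _τ : Fin m → Bool, ε * Real.exp (-(2:ℝ)) / 8 := by
        apply Finset.sum_le_sum
        intro τ _
        exact (hcon τ).le
      rw [Finset.sum_const, Finset.card_univ, nsmul_eq_mul, Fintype.card_fun,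
        Fintype.card_bool, Fintype.card_fin] at this
      push_cast at this
      have h2m : (0:ℝ) < 2^m := by positivity
      have hstrict : ∑ τ : Fin m → Bool, Exp (Sfam n r k e ε τ) (fun x => TV (θ.1 x) (qp k e ε τ))
          < (2:ℝ)^m * (ε * Real.exp (-(2:ℝ)) / 8) := by
        calc ∑ τ : Fin m → Bool, Exp (Sfam n r k e ε τ) (fun x => TV (θ.1 x) (qp k e ε τ))
            < ∑ _τ : Fin m → Bool, ε * Real.exp (-(2:ℝ)) / 8 := by
              apply Finset.sum_lt_sum_of_nonempty Finset.univ_nonempty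
              intro τ _
              exact hcon τ
          _ = (2:ℝ)^m * (ε * Real.exp (-(2:ℝ)) / 8) := by
              rw [Finset.sum_const, Finset.card_univ, nsmul_eq_mul, Fintype.card_fun,
                Fintype.card_bool, Fintype.card_fin]
              push_cast
              ring
      linarith [hass]
    obtain ⟨τ, hτ⟩ := hex
    have hδbound : δ / (16 * Real.exp 2) ≤ ε * Real.exp (-(2:ℝ)) / 8 := by
      rw [Real.exp_neg]
      have hE : (0:ℝ) < Real.exp 2 := Real.exp_pos 2
      rw [div_le_div_iff₀ (by positivity) (by norm_num)]
      have hfs : ε * (Real.exp 2)⁻¹ * (16 * Real.exp 2) = 16 * ε := by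
        field_simp
      rw [hfs]
      linarith
    refine le_trans hδbound (le_trans hτ ?_)
    -- now Exp at τ ≤ sup
    have hbdd : BddAbove (Set.range fun S : {P : ℕ → Fin k → ℝ // InFamily n k Δ P} =>
        Exp S.1 fun x => TV (θ.1 x) (S.1 n)) := by
      refine ⟨1, ?_⟩
      rintro y ⟨S, rfl⟩
      exact exp_le_one S.1 S.2.1 _ (fun x => tv_nonneg _ _)
        (fun x => tv_le_one _ _ (θ.2 x) (S.2.1 n (by simp [Finset.mem_Icc]; omega)))
    have := le_ciSup hbdd (⟨Sfam n r k e ε τ, hfam τ⟩ :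
      {P : ℕ → Fin k → ℝ // InFamily n k Δ P})
    simpa [hSn τ] using this
  have hmain : δ / (16 * Real.exp 2) ≤ minimaxRisk n k Δ := by
    unfold minimaxRisk
    have : Nonempty {θ : (Fin n → Fin k) → Fin k → ℝ // ∀ x, IsPMF (θ x)} :=
      ⟨⟨fun _ => fun _ => (k:ℝ)⁻¹, fun _ => unif_isPMF hk⟩⟩
    exact le_ciInf hkey
  constructor
  · exact hmain
  · -- second claim
    have hstep : Real.sqrt ((k:ℝ)/(r+1)) < c * δ := by
      have hmem' : (r+1) ∈ Finset.Icc 1 n := by simp [Finset.mem_Icc]; omega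
      have hnot : ¬ (Δ (n - (r+1) + 1) ≤ Real.sqrt ((k:ℝ)/(r+1))) := by
        intro hcon
        have := hmax (r+1) hmem' (by exact_mod_cast hcon)
        omega
      push_neg at hnot
      have hidx : n - (r+1) + 1 = n - r := by omega
      rw [hidx] at hnot
      have hreg2 : Δ (n - r) ≤ c * δ := by
        have := hcreg (n - r + 1) (by simp [Finset.mem_Icc]; omega)
        have hidx2 : n - r + 1 - 1 = n - r := by omega
        rw [hidx2] at this
        exact this
      calc Real.sqrt ((k:ℝ)/(r+1)) < Δ (n - r) := by exact_mod_cast hnot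
        _ ≤ c * δ := hreg2
    have hcpos : (0:ℝ) < c := lt_of_lt_of_le one_pos hc
    have hepos : (0:ℝ) < Real.exp 2 := Real.exp_pos 2
    calc (1 / (16 * Real.exp 2 * c)) * Real.sqrt ((k : ℝ) / (r + 1))
        ≤ (1 / (16 * Real.exp 2 * c)) * (c * δ) := by
          apply mul_le_mul_of_nonneg_left hstep.le (by positivity)
      _ = δ / (16 * Real.exp 2) := by field_simp
      _ ≤ minimaxRisk n k Δ := hmain
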